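/- Fix integers r ≥ 1 and n ≥ 1, and let I = {−r,…,−1} ∪ {1,…,n} ⊂ ℤ. Let i : ℤ → ℤ be a function with i(−k) = k for all k ∈ {1,…,r} and |i(k)| ∈ {1,…,r} for all k ∈ {1,…,n}, let k⁺ and the I×I matrix M(A) attached to an r×r integer matrix A be defined as follows: for k ∈ I, k⁺ = min{ j : k < j ≤ n, |i(j)| = |i(k)| } (or n+1 if no such j exists); for k,l ∈ I, with p = max(k,l), q = min(k⁺,l⁺), and ε the sign function, M(A)_{kl} = −ε(k−l)·ε(i(p)) if p = q; M(A)_{kl} = −ε(k−l)·ε(i(p))·A_{|i(k)|,|i(l)|} if p < q and ε(i(p))·ε(i(q))·(k−l)·(k⁺−l⁺) > 0; and M(A)_{kl} = 0 otherwise. Suppose D = diag(d_1,…,d_r) is a diagonal integer matrix with positive entries such that AD is symmetric, i.e. A_{ab}·d_b = A_{ba}·d_a for all a,b ∈ {1,…,r}. Then the diagonal I×I matrix 𝐃 with entries 𝐃_{kk} = d_{|i(k)|} is a skew-symmetrizer of M(A): for all k,l ∈ I, M(A)_{kl}·d_{|i(l)|} = −M(A)_{lk}·d_{|i(k)|}.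 -/

import Mathlib

/-- For `k ∈ I`, `k⁺` is the smallest index `j` with `k < j ≤ n` and `|ι j| = |ι k|`,
or `n + 1` if no such index exists. -/
noncomputable def kPlus (n : ℤ) (ι : ℤ → ℤ) (k : ℤ) : ℤ :=
  let S := (Finset.Icc (k + 1) n).filter fun j => |ι j| = |ι k|
  if h : S.Nonempty then S.min' h else n + 1

/-- The Berenstein–Fomin–Zelevinsky seed matrix `M(𝐢)` attached to a double reduced word,
built from an `r × r` Cartan-type matrix `A`. -/
noncomputable def bfzSeedMatrix (n : ℤ) (ι : ℤ → ℤ) (A : ℤ → ℤ → ℤ) (k l : ℤ) : ℤ :=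
  let p := max k l
  let q := min (kPlus n ι k) (kPlus n ι l)
  if p = q then -(k - l).sign * (ι p).sign
  else if p < q ∧ 0 < (ι p).sign * (ι q).sign * (k - l) * (kPlus n ι k - kPlus n ι l) then
    -(k - l).sign * (ι p).sign * A |ι k| |ι l|
  else 0

lemma lt_kPlus (n : ℤ) (ι : ℤ → ℤ) (k : ℤ) (h : k ≤ n) : k < kPlus n ι k := by
  simp only [kPlus]
  split_ifs with hS
  · have := Finset.min'_mem _ hS
    simp only [Finset.mem_filter, Finset.mem_Icc] at this
    omega
  · omega

lemma kPlus_abs (n : ℤ) (ι : ℤ → ℤ) (k : ℤ) (h : kPlus n ι k ≤ n) :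
    |ι (kPlus n ι k)| = |ι k| := by
  simp only [kPlus] at h ⊢
  split_ifs at h ⊢ with hS
  · have := Finset.min'_mem _ hS
    simp only [Finset.mem_filter, Finset.mem_Icc] at this
    exact this.2
  · omega


/-- If `D = diag(d_1,…,d_r)` with positive integer entries symmetrizes `A`
(i.e. `A_{ab} d_b = A_{ba} d_a`), then the diagonal matrix `𝐃` with entries
`𝐃_{kk} = d_{|ι k|}` is a skew-symmetrizer of the seed matrix `M(A)`:
`M(A)_{kl} · d_{|ι l|} = -(M(A)_{lk} · d_{|ι k|})` for all `k, l` in the index set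
`I = {-r,…,-1} ∪ {1,…,n}`. -/
theorem bfzSeedMatrix_skew_symmetrizer
    (r n : ℤ) (hr : 1 ≤ r) (hn : 1 ≤ n) (ι : ℤ → ℤ)
    (hneg : ∀ a : ℤ, 1 ≤ a → a ≤ r → ι (-a) = a)
    (hpos : ∀ j : ℤ, 1 ≤ j → j ≤ n → 1 ≤ |ι j| ∧ |ι j| ≤ r)
    (A : ℤ → ℤ → ℤ) (d : ℤ → ℤ)
    (hdpos : ∀ a : ℤ, 1 ≤ a → a ≤ r → 0 < d a)
    (hsym : ∀ a b : ℤ, 1 ≤ a → a ≤ r → 1 ≤ b → b ≤ r → A a b * d b = A b a * d a)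
    (k l : ℤ)
    (hk : (-r ≤ k ∧ k ≤ -1) ∨ (1 ≤ k ∧ k ≤ n))
    (hl : (-r ≤ l ∧ l ≤ -1) ∨ (1 ≤ l ∧ l ≤ n)) :
    bfzSeedMatrix n ι A k l * d |ι l| = -(bfzSeedMatrix n ι A l k * d |ι k|) := by
  have habs : ∀ m : ℤ, ((-r ≤ m ∧ m ≤ -1) ∨ (1 ≤ m ∧ m ≤ n)) → 1 ≤ |ι m| ∧ |ι m| ≤ r := by
    rintro m (⟨h1, h2⟩ | ⟨h1, h2⟩)
    · have := hneg (-m) (by omega) (by omega)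
      rw [show (-(-m)) = m by ring] at this
      rw [this, abs_of_nonneg (by omega : (0:ℤ) ≤ -m)]
      omega
    · exact hpos m h1 h2
  obtain ⟨hk1, hk2⟩ := habs k hk
  obtain ⟨hl1, hl2⟩ := habs l hl
  have hkn : k ≤ n := by rcases hk with ⟨_, h⟩ | ⟨_, h⟩ <;> omega
  have hln : l ≤ n := by rcases hl with ⟨_, h⟩ | ⟨_, h⟩ <;> omega
  have hkp := lt_kPlus n ι k hkn
  have hlp := lt_kPlus n ι l hln
  simp only [bfzSeedMatrix]
  rw [max_comm l k, min_comm (kPlus n ι l) (kPlus n ι k)]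
  rw [show (ι (max k l)).sign * (ι (min (kPlus n ι k) (kPlus n ι l))).sign * (l - k) *
      (kPlus n ι l - kPlus n ι k)
      = (ι (max k l)).sign * (ι (min (kPlus n ι k) (kPlus n ι l))).sign * (k - l) *
      (kPlus n ι k - kPlus n ι l) from by ring]
  split_ifs with h1 h2
  · -- p = q case: |ι k| = |ι l|
    have habs2 : |ι k| = |ι l| := by
      rcases lt_trichotomy k l with hlt | heq | hgt
      · have hmax : max k l = l := max_eq_right hlt.le
        have hkl : kPlus n ι k = l := by
          rw [hmax] at h1
          rcases le_or_gt (kPlus n ι k) (kPlus n ι l) with hle | hlt2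
          · rw [min_eq_left hle] at h1; omega
          · rw [min_eq_right hlt2.le] at h1; omega
        have habs' := kPlus_abs n ι k (by omega)
        rw [hkl] at habs'
        omega
      · exfalso
        rw [heq, max_self, min_self] at h1
        have := lt_kPlus n ι l hln
        omega
      · have hmax : max k l = k := max_eq_left hgt.le
        have hkl : kPlus n ι l = k := by
          rw [hmax] at h1
          rcases le_or_gt (kPlus n ι k) (kPlus n ι l) with hle | hlt2
          · rw [min_eq_left hle] at h1; omega
          · rw [min_eq_right hlt2.le] at h1; omega
        have habs' := kPlus_abs n ι l (by omega)
        rw [hkl] at habs'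
        omega
    rw [habs2, show l - k = -(k - l) from by ring, Int.sign_neg]
    ring
  · -- p < q and condition
    rw [show l - k = -(k - l) from by ring, Int.sign_neg]
    have := hsym |ι k| |ι l| hk1 hk2 hl1 hl2
    linear_combination (-(k - l).sign * (ι (max k l)).sign) * this
  · ring
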